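/- Let X be a CAT(0) geodesic metric space and g an isometry of X. Then L(g) = ℓ(g). In particular L(g^n) = n·L(g) for every integer n ≥ 1, and for every point x ∈ X one has L(g) = lim_{n→∞} d(g^n·x, x)/n. -/

import Mathlib

open Pointwise Filter

/-- The joint displacement of a set of isometries at a point:
`L(S,x) = max_{s ∈ S} d(x, s x)`. -/
noncomputable def jointDispAt {X : Type*} [MetricSpace X] (S : Set (X ≃ᵢ X)) (x : X) : ℝ :=
  sSup ((fun s : X ≃ᵢ X => dist x (s x)) '' S)

/-- The joint minimal displacement `L(S) = inf_x L(S,x)`. -/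
noncomputable def jointMinDisp {X : Type*} [MetricSpace X] (S : Set (X ≃ᵢ X)) : ℝ :=
  sInf (Set.range (jointDispAt S))

/-- The asymptotic joint displacement `ℓ(S) = lim_n L(S^n)/n`; the limit exists by
subadditivity, hence agrees with the `limsup` used here. -/
noncomputable def asympDisp {X : Type*} [MetricSpace X] (S : Set (X ≃ᵢ X)) : ℝ :=
  Filter.limsup (fun n : ℕ => jointMinDisp (S ^ n) / n) Filter.atTop

/-- `λ(S) = max_{s ∈ S} ℓ(s)`. -/
noncomputable def lamD {X : Type*} [MetricSpace X] (S : Set (X ≃ᵢ X)) : ℝ :=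
  sSup ((fun s : X ≃ᵢ X => asympDisp {s}) '' S)

/-- `λ_k(S) = max_{1 ≤ j ≤ k} λ(S^j)/j`. -/
noncomputable def lamK {X : Type*} [MetricSpace X] (k : ℕ) (S : Set (X ≃ᵢ X)) : ℝ :=
  sSup ((fun j : ℕ => lamD (S ^ j) / j) '' Set.Icc 1 k)

/-- `λ_∞(S) = sup_{j ≥ 1} λ(S^j)/j`. -/
noncomputable def lamInf {X : Type*} [MetricSpace X] (S : Set (X ≃ᵢ X)) : ℝ :=
  sSup ((fun j : ℕ => lamD (S ^ j) / j) '' Set.Ici 1)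

/-- A geodesic segment from `a` to `b`: an isometric image of the interval `[0, d(a,b)]`. -/
def IsGeodesicSegment {X : Type*} [MetricSpace X] (s : Set X) (a b : X) : Prop :=
  ∃ f : ℝ → X, f 0 = a ∧ f (dist a b) = b ∧
    (∀ u ∈ Set.Icc (0 : ℝ) (dist a b), ∀ v ∈ Set.Icc (0 : ℝ) (dist a b),
      dist (f u) (f v) = |u - v|) ∧
    s = f '' Set.Icc (0 : ℝ) (dist a b)

/-- A geodesic metric space: every two points are joined by a geodesic segment. -/
def GeodesicSpace (X : Type*) [MetricSpace X] : Prop :=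
  ∀ a b : X, ∃ s : Set X, IsGeodesicSegment s a b

/-- `δ`-hyperbolicity: every geodesic triangle is `δ`-thin, i.e. each side is contained in
the closed `δ`-neighborhood of the union of the other two sides. -/
def GromovHyperbolic (X : Type*) [MetricSpace X] (δ : ℝ) : Prop :=
  ∀ a b c : X, ∀ sab sbc sca : Set X,
    IsGeodesicSegment sab a b → IsGeodesicSegment sbc b c → IsGeodesicSegment sca c a →
      (∀ x ∈ sab, ∃ y ∈ sbc ∪ sca, dist x y ≤ δ) ∧
      (∀ x ∈ sbc, ∃ y ∈ sab ∪ sca, dist x y ≤ δ) ∧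
      (∀ x ∈ sca, ∃ y ∈ sab ∪ sbc, dist x y ≤ δ)

/-- The CAT(0) comparison inequality: for all `a b c` and every midpoint `m` of a geodesic
from `b` to `c`, `2 d(a,m)² ≤ d(a,b)² + d(a,c)² - d(b,c)²/2`. -/
def CAT0 (X : Type*) [MetricSpace X] : Prop :=
  ∀ a b c m : X, dist b m = dist b c / 2 → dist m c = dist b c / 2 →
    2 * dist a m ^ 2 ≤ dist a b ^ 2 + dist a c ^ 2 - dist b c ^ 2 / 2

/-- A subset is (geodesically) convex if every geodesic segment between two of its points is
contained in it. -/
def GeodConvex {X : Type*} [MetricSpace X] (C : Set X) : Prop :=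
  ∀ a ∈ C, ∀ b ∈ C, ∀ s : Set X, IsGeodesicSegment s a b → s ⊆ C

/-- Translation length `L(g) = inf_x d(x, g x)`. -/
noncomputable def transLen {X : Type*} [MetricSpace X] (g : X ≃ᵢ X) : ℝ :=
  sInf (Set.range fun x : X => dist x (g x))

/-- Asymptotic translation length `ℓ(g) = lim_n L(g^n)/n`. -/
noncomputable def asympTransLen {X : Type*} [MetricSpace X] (g : X ≃ᵢ X) : ℝ :=
  Filter.limsup (fun n : ℕ => transLen (g ^ n) / n) Filter.atTop


/-- Existence of midpoints in a geodesic space. -/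
lemma exists_midpoint_of_geodesic {X : Type*} [MetricSpace X] (hgeo : GeodesicSpace X)
    (a b : X) : ∃ m : X, dist a m = dist a b / 2 ∧ dist m b = dist a b / 2 := by
  obtain ⟨s, f, hf0, hfd, hiso, -⟩ := hgeo a b
  have hd : (0:ℝ) ≤ dist a b := dist_nonneg
  refine ⟨f (dist a b / 2), ?_, ?_⟩
  · have h := hiso 0 ⟨le_refl 0, hd⟩ (dist a b / 2) ⟨by linarith, by linarith⟩
    rw [hf0] at h
    rw [h, zero_sub, abs_neg, abs_of_nonneg (by linarith)]
  · have h := hiso (dist a b / 2) ⟨by linarith, by linarith⟩ (dist a b) ⟨hd, le_refl _⟩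
    rw [hfd] at h
    rw [h, abs_of_nonpos (by linarith)]
    ring

/-- The CAT(0) midpoint lemma: the distance between the midpoints of two sides of a
triangle is at most half the length of the third side. -/
lemma midpoint_dist_le_of_CAT0 {X : Type*} [MetricSpace X] (hcat : CAT0 X) {a b c m p : X}
    (h1 : dist a m = dist a b / 2) (h2 : dist m b = dist a b / 2)
    (h3 : dist b p = dist b c / 2) (h4 : dist p c = dist b c / 2) :
    dist m p ≤ dist a c / 2 := by
  have H1 := hcat p a b m h1 h2
  have H2 := hcat a b c p h3 h4
  have e1 : dist p b = dist b c / 2 := by rw [dist_comm]; exact h3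
  have e2 : dist a p = dist p a := dist_comm a p
  rw [e2] at H2
  have e3 : dist m p = dist p m := dist_comm m p
  have key : dist m p ^ 2 ≤ (dist a c / 2) ^ 2 := by
    rw [e3]
    have e1sq : dist p b ^ 2 = dist b c ^ 2 / 4 := by rw [e1]; ring
    nlinarith [H1, H2, e1sq]
  exact le_of_pow_le_pow_left₀ two_ne_zero (by positivity) key

/-- In a CAT(0) geodesic metric space, `L(g) = ℓ(g)` for every isometry `g`;
in particular `L(g^n) = n L(g)` for all `n ≥ 1`, and for every point `x`,
`d(g^n x, x)/n → L(g)`. -/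
theorem transLen_eq_asympTransLen_of_CAT0 {X : Type*} [MetricSpace X]
    (hgeo : GeodesicSpace X) (hcat : CAT0 X) (g : X ≃ᵢ X) :
    transLen g = asympTransLen g ∧
    (∀ n : ℕ, 1 ≤ n → transLen (g ^ n) = n * transLen g) ∧
    ∀ x : X, Filter.Tendsto (fun n : ℕ => dist ((g ^ n) x) x / n) Filter.atTop
      (nhds (transLen g)) := by
  rcases isEmpty_or_nonempty X with hX | hX
  · -- trivial case: the space is empty
    have hT : ∀ h : X ≃ᵢ X, transLen h = 0 := by
      intro h
      rw [transLen, Set.range_eq_empty _, Real.sInf_empty]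
    refine ⟨?_, fun n _ => by rw [hT, hT, mul_zero], fun x => (hX.false x).elim⟩
    have hconst : (fun n : ℕ => transLen (g ^ n) / n) = fun _ : ℕ => (0:ℝ) := by
      funext n; rw [hT]; simp
    rw [hT g, asympTransLen, hconst, Filter.limsup_const]
  · -- main case
    have hbdd : ∀ h : X ≃ᵢ X, BddBelow (Set.range fun x : X => dist x (h x)) := by
      intro h
      refine ⟨0, ?_⟩
      rintro r ⟨x, rfl⟩
      exact dist_nonneg
    have hle : ∀ (h : X ≃ᵢ X) (x : X), transLen h ≤ dist x (h x) :=
      fun h x => csInf_le (hbdd h) ⟨x, rfl⟩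
    have hpow_apply : ∀ (m n : ℕ) (x : X), (g ^ (m + n)) x = (g ^ m) ((g ^ n) x) := by
      intro m n x
      rw [pow_add]
      rfl
    have hdist_iso : ∀ (m : ℕ) (a b : X), dist ((g ^ m) a) ((g ^ m) b) = dist a b :=
      fun m a b => (g ^ m).dist_eq a b
    set u : X → ℕ → ℝ := fun x n => dist ((g ^ n) x) x with hu
    have hsub : ∀ x, Subadditive (u x) := by
      intro x m n
      calc u x (m + n) ≤ dist ((g ^ (m + n)) x) ((g ^ m) x) + dist ((g ^ m) x) x :=
            dist_triangle _ _ _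
        _ = u x n + u x m := by rw [hpow_apply m n x, hdist_iso]
        _ = u x m + u x n := add_comm _ _
    have hub : ∀ (x : X) (n : ℕ), u x n ≤ n * dist x (g x) := by
      intro x n
      induction n with
      | zero => simp [u]
      | succ n ih =>
          have h1 : u x (n + 1) ≤ u x n + u x 1 := hsub x n 1
          have h2 : u x 1 = dist x (g x) := by
            simp only [u, pow_one]
            exact dist_comm _ _
          push_cast
          nlinarith [ih]
    -- key dyadic estimate from the CAT(0) midpoint lemma
    have hB : ∀ (k : ℕ) (x : X), (2:ℝ) ^ k * transLen g ≤ dist x ((g ^ (2 ^ k : ℕ)) x) := by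
      intro k
      induction k with
      | zero =>
          intro x
          simpa using hle g x
      | succ k ih =>
          intro x
          obtain ⟨m, hm1, hm2⟩ := exists_midpoint_of_geodesic hgeo x ((g ^ (2 ^ k : ℕ)) x)
          have hDbc : dist ((g ^ (2 ^ k : ℕ)) x) ((g ^ (2 ^ k : ℕ)) ((g ^ (2 ^ k : ℕ)) x))
              = dist x ((g ^ (2 ^ k : ℕ)) x) := hdist_iso _ _ _
          have h3 : dist ((g ^ (2 ^ k : ℕ)) x) ((g ^ (2 ^ k : ℕ)) m)
              = dist ((g ^ (2 ^ k : ℕ)) x) ((g ^ (2 ^ k : ℕ)) ((g ^ (2 ^ k : ℕ)) x)) / 2 := by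
            rw [hdist_iso, hDbc]; exact hm1
          have h4 : dist ((g ^ (2 ^ k : ℕ)) m) ((g ^ (2 ^ k : ℕ)) ((g ^ (2 ^ k : ℕ)) x))
              = dist ((g ^ (2 ^ k : ℕ)) x) ((g ^ (2 ^ k : ℕ)) ((g ^ (2 ^ k : ℕ)) x)) / 2 := by
            rw [hdist_iso, hDbc]; exact hm2
          have hmid := midpoint_dist_le_of_CAT0 hcat hm1 hm2 h3 h4
          have hih := ih m
          have hexp : (2 ^ k : ℕ) + 2 ^ k = 2 ^ (k + 1) := by ring
          have hcx : (g ^ (2 ^ k : ℕ)) ((g ^ (2 ^ k : ℕ)) x) = (g ^ (2 ^ (k + 1) : ℕ)) x := by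
            rw [← hpow_apply, hexp]
          rw [← hcx]
          calc (2:ℝ) ^ (k + 1) * transLen g = 2 * ((2:ℝ) ^ k * transLen g) := by ring
            _ ≤ 2 * dist m ((g ^ (2 ^ k : ℕ)) m) := by linarith
            _ ≤ dist x ((g ^ (2 ^ k : ℕ)) ((g ^ (2 ^ k : ℕ)) x)) := by linarith
    have hbdd0 : ∀ x : X, BddBelow (Set.range fun n : ℕ => u x n / n) := by
      intro x
      refine ⟨0, ?_⟩
      rintro r ⟨n, rfl⟩
      have : (0:ℝ) ≤ u x n := dist_nonneg
      positivity
    have htend : ∀ x : X, Filter.Tendsto (fun n : ℕ => u x n / n) Filter.atTop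
        (nhds ((hsub x).lim)) := fun x => (hsub x).tendsto_lim (hbdd0 x)
    have hlim_eq : ∀ x : X, (hsub x).lim = transLen g := by
      intro x
      apply le_antisymm
      · apply le_csInf (Set.range_nonempty _)
        rintro r ⟨y, rfl⟩
        have h2 : Filter.Tendsto (fun n : ℕ => dist y (g y) + 2 * dist x y / n)
            Filter.atTop (nhds (dist y (g y) + 0)) :=
          tendsto_const_nhds.add (tendsto_const_div_atTop_nhds_zero_nat _)
        rw [add_zero] at h2
        refine le_of_tendsto_of_tendsto' (htend x) h2 ?_
        intro n
        rcases Nat.eq_zero_or_pos n with rfl | hn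
        · have h0 : u x 0 = 0 := by simp [u]
          rw [h0]
          norm_num
        · have hn' : (0:ℝ) < (n : ℝ) := by exact_mod_cast hn
          have key : u x n ≤ n * dist y (g y) + 2 * dist x y := by
            have t1 : u x n ≤ dist ((g ^ n) x) ((g ^ n) y) + dist ((g ^ n) y) y + dist y x :=
              dist_triangle4 _ _ _ _
            rw [hdist_iso] at t1
            have t2 : dist ((g ^ n) y) y ≤ n * dist y (g y) := hub y n
            have t3 : dist y x = dist x y := dist_comm y x
            have t4 : dist x y = dist x y := rfl
            calc u x n ≤ dist x y + dist ((g ^ n) y) y + dist y x := t1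
              _ ≤ dist x y + n * dist y (g y) + dist x y := by rw [t3]; linarith
              _ = n * dist y (g y) + 2 * dist x y := by ring
          calc u x n / n ≤ (n * dist y (g y) + 2 * dist x y) / n :=
                (div_le_div_iff_of_pos_right hn').mpr key
            _ = dist y (g y) + 2 * dist x y / n := by
                rw [add_div, mul_div_cancel_left₀ _ (ne_of_gt hn')]
      · have hsubseq : Filter.Tendsto (fun k : ℕ => u x (2 ^ k) / ((2 ^ k : ℕ) : ℝ))
            Filter.atTop (nhds ((hsub x).lim)) :=
          (htend x).comp (tendsto_pow_atTop_atTop_of_one_lt one_lt_two)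
        refine ge_of_tendsto' hsubseq ?_
        intro k
        have h1 := hB k x
        have h2 : (0:ℝ) < ((2 ^ k : ℕ) : ℝ) := by positivity
        rw [le_div_iff₀ h2]
        have hcast : ((2 ^ k : ℕ) : ℝ) = (2:ℝ) ^ k := by push_cast; ring
        have h3 : u x (2 ^ k) = dist x ((g ^ (2 ^ k : ℕ)) x) := dist_comm _ _
        rw [h3, hcast, mul_comm]
        exact h1
    have hmain : ∀ n : ℕ, 1 ≤ n → transLen (g ^ n) = n * transLen g := by
      intro n hn
      have hn' : (0:ℝ) < (n : ℝ) := by exact_mod_cast hn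
      apply le_antisymm
      · -- transLen (g ^ n) ≤ n * transLen g
        rw [← div_le_iff₀' hn']
        apply le_csInf (Set.range_nonempty _)
        rintro r ⟨y, rfl⟩
        show transLen (g ^ n) / (n:ℝ) ≤ dist y (g y)
        rw [div_le_iff₀' hn']
        calc transLen (g ^ n) ≤ dist y ((g ^ n) y) := hle (g ^ n) y
          _ = u y n := dist_comm _ _
          _ ≤ n * dist y (g y) := hub y n
      · apply le_csInf (Set.range_nonempty _)
        rintro r ⟨y, rfl⟩
        show (n:ℝ) * transLen g ≤ dist y ((g ^ n) y)
        have h1 : (hsub y).lim ≤ u y n / n :=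
          (hsub y).lim_le_div (hbdd0 y) (by omega)
        rw [hlim_eq y] at h1
        have h2 : dist y ((g ^ n) y) = u y n := dist_comm _ _
        rw [h2, ← le_div_iff₀' hn']
        linarith
    refine ⟨?_, hmain, ?_⟩
    · have hev : (fun n : ℕ => transLen (g ^ n) / n) =ᶠ[Filter.atTop]
          fun _ : ℕ => transLen g := by
        filter_upwards [Filter.eventually_ge_atTop 1] with n hn
        rw [hmain n hn, mul_div_cancel_left₀]
        exact Nat.cast_ne_zero.mpr (by omega)
      rw [asympTransLen, Filter.limsup_congr hev, Filter.limsup_const]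
    · intro x
      have := htend x
      rwa [hlim_eq x] at this
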